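/- Let I ⊆ ℝ be an open interval, let h : I → ℝ be continuous, let c ∈ I and λ > 1, and set a = c + arcoth(λ)/(λ − 1). Assume h(s) ≤ −1 for every s ∈ I with s ≥ c, and that sup I > a. Then there is no twice continuously differentiable function f : [c, a] → ℝ satisfying f''(s) = (−1 + (f'(s))²)·(1 − h(s)·f'(s)) for all s ∈ [c, a] with f'(c) = −λ; that is, every such solution blows up before a. -/

import Mathlib

open Set Filter

/-- The inverse hyperbolic cotangent, `arcoth x = (1/2)·ln((x+1)/(x−1))` for `x > 1`. -/
noncomputable def arcoth (x : ℝ) : ℝ := (1 / 2) * Real.log ((x + 1) / (x - 1))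

/-- Finite time blow up for `f'' = (−1 + (f')²)(1 − h f')` with
`f'(c) = −λ`, `λ > 1` and `h ≤ −1` on `I ∩ [c, ∞)`: no `C²` solution exists on all of
`[c, a]` where `a = c + arcoth(λ)/(λ − 1)`. -/
theorem blow_up_case_eps_one_epstilde_neg_one_negative_slope
    (I : Set ℝ) (hIopen : IsOpen I) (hIconn : I.OrdConnected)
    (h : ℝ → ℝ) (hcont : ContinuousOn h I)
    (c : ℝ) (hc : c ∈ I) (l : ℝ) (hl : 1 < l)
    (a : ℝ) (ha : a = c + arcoth l / (l - 1))
    (hneg : ∀ s ∈ I, c ≤ s → h s ≤ -1)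
    (hsup : ∃ s ∈ I, a < s) :
    ¬ ∃ f : ℝ → ℝ,
      ContDiffOn ℝ 2 f (Set.Icc c a) ∧
      (∀ s ∈ Set.Icc c a,
        derivWithin (derivWithin f (Set.Icc c a)) (Set.Icc c a) s =
          (-1 + (derivWithin f (Set.Icc c a) s) ^ 2) *
            (1 - h s * derivWithin f (Set.Icc c a) s)) ∧
      derivWithin f (Set.Icc c a) c = -l := by
  rintro ⟨f, hf, hode, hgc⟩
  set g : ℝ → ℝ := derivWithin f (Set.Icc c a) with hg_def
  have hl0 : (0:ℝ) < l - 1 := by linarith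
  have hl1 : (0:ℝ) < l + 1 := by linarith
  -- arcoth l > 0
  have harc : 0 < arcoth l := by
    have h1 : (1:ℝ) < (l + 1) / (l - 1) := by
      rw [lt_div_iff₀ hl0]; linarith
    have := Real.log_pos h1
    unfold arcoth; positivity
  have hca : c < a := by
    rw [ha]; nlinarith [div_pos harc hl0]
  have hca' : c ≤ a := hca.le
  -- Icc c a ⊆ I
  obtain ⟨s₀, hs₀I, hs₀⟩ := hsup
  have hIccI : Set.Icc c a ⊆ I := by
    intro x hx
    exact hIconn.out hc hs₀I ⟨hx.1, le_trans hx.2 hs₀.le⟩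
  have hud : UniqueDiffOn ℝ (Set.Icc c a) := uniqueDiffOn_Icc hca
  -- g is C¹ on Icc c a
  have hg1 : ContDiffOn ℝ 1 g (Set.Icc c a) :=
    hf.derivWithin hud (by norm_num)
  have hgcont : ContinuousOn g (Set.Icc c a) := hg1.continuousOn
  have hgdiff : DifferentiableOn ℝ g (Set.Icc c a) :=
    hg1.differentiableOn (by norm_num)
  -- φ s : the derivative of g
  set φ : ℝ → ℝ := fun s => (-1 + (g s) ^ 2) * (1 - h s * g s) with hφ_def
  have hgderiv : ∀ s ∈ Set.Icc c a, HasDerivWithinAt g (φ s) (Set.Icc c a) s := by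
    intro s hs
    have := (hgdiff s hs).hasDerivWithinAt
    rwa [hode s hs] at this
  have hφcont : ContinuousOn φ (Set.Icc c a) := by
    apply ContinuousOn.mul
    · exact (continuousOn_const.add (hgcont.pow 2))
    · exact continuousOn_const.sub ((hcont.mono hIccI).mul hgcont)
  -- Step 1: g ≤ -l on all of Icc c a
  have key : ∀ s ∈ Set.Icc c a, g s ≤ -l := by
    set S : Set ℝ := {s | s ∈ Set.Icc c a ∧ ∀ r ∈ Set.Icc c s, g r ≤ -l} with hS_def
    have hcS : c ∈ S := by
      refine ⟨⟨le_refl c, hca'⟩, ?_⟩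
      intro r hr
      have : r = c := le_antisymm hr.2 hr.1
      rw [this, hgc]
    have hSne : S.Nonempty := ⟨c, hcS⟩
    have hSbd : BddAbove S := ⟨a, fun x hx => hx.1.2⟩
    set m := sSup S with hm_def
    have hcm : c ≤ m := le_csSup hSbd hcS
    have hma : m ≤ a := csSup_le hSne (fun x hx => hx.1.2)
    have hmIcc : m ∈ Set.Icc c a := ⟨hcm, hma⟩
    -- g ≤ -l on [c, m)
    have hIco : ∀ r ∈ Set.Ico c m, g r ≤ -l := by
      intro r hr
      obtain ⟨s, hsS, hrs⟩ := exists_lt_of_lt_csSup hSne hr.2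
      exact hsS.2 r ⟨hr.1, hrs.le⟩
    -- g ≤ -l on [c, m]
    have hgm : ∀ r ∈ Set.Icc c m, g r ≤ -l := by
      intro r hr
      rcases eq_or_lt_of_le hr.2 with heq | hlt
      · rcases eq_or_lt_of_le hcm with hcm' | hcm'
        · rw [heq, ← hcm', hgc]
        · -- r = m, use continuity: m ∈ closure (Ico c m)
          have hT : IsClosed {s ∈ Set.Icc c a | g s ≤ -l} := by
            have : {s ∈ Set.Icc c a | g s ≤ -l} = Set.Icc c a ∩ g ⁻¹' Set.Iic (-l) := by
              ext x; simp [Set.mem_Iic]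
            rw [this]
            exact hgcont.preimage_isClosed_of_isClosed isClosed_Icc isClosed_Iic
          have hsub : Set.Ico c m ⊆ {s ∈ Set.Icc c a | g s ≤ -l} := by
            intro x hx
            exact ⟨⟨hx.1, le_trans hx.2.le hma⟩, hIco x hx⟩
          have hmem : m ∈ closure (Set.Ico c m) := by
            rw [closure_Ico (ne_of_lt hcm')]
            exact ⟨hcm, le_refl m⟩
          have := hT.closure_subset ((closure_mono hsub) hmem)
          rw [heq]
          exact this.2
      · exact hIco r ⟨hr.1, hlt⟩
    -- m = a
    have hmeq : m = a := by
      by_contra hne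
      have hma' : m < a := lt_of_le_of_ne hma hne
      have hgmm : g m ≤ -l := hgm m ⟨hcm, le_refl m⟩
      -- φ m < 0
      have hφm : φ m < 0 := by
        have hmI : m ∈ I := hIccI hmIcc
        have hhm : h m ≤ -1 := hneg m hmI hcm
        have h1 : (1:ℝ) < (g m)^2 := by nlinarith
        have h2 : l ≤ h m * g m := by nlinarith
        have : (0:ℝ) < -1 + (g m)^2 := by linarith
        have : 1 - h m * g m < 0 := by linarith
        exact mul_neg_of_pos_of_neg (by linarith) this
      -- find δ > 0 with φ < 0 on Icc c a ∩ ball m ε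
      have hev : ∀ᶠ x in nhdsWithin m (Set.Icc c a), φ x < 0 := by
        have := (hφcont m hmIcc).eventually (p := fun y => y < 0) (eventually_lt_nhds hφm)
        exact this
      rw [eventually_iff, Metric.mem_nhdsWithin_iff] at hev
      obtain ⟨ε, hε, hball⟩ := hev
      set δ := min (ε / 2) (a - m) with hδ_def
      have hδ0 : 0 < δ := lt_min (by linarith) (by linarith)
      have hδa : m + δ ≤ a := by
        have : δ ≤ a - m := min_le_right _ _
        linarith
      have hδε : δ < ε := lt_of_le_of_lt (min_le_left _ _) (by linarith)
      have hφneg : ∀ x ∈ Set.Icc m (m + δ), φ x < 0 := by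
        intro x hx
        have hxIcc : x ∈ Set.Icc c a := ⟨le_trans hcm hx.1, le_trans hx.2 hδa⟩
        apply hball
        constructor
        · rw [Metric.mem_ball, Real.dist_eq, abs_sub_lt_iff]
          constructor <;> [linarith [hx.2, hx.1]; linarith [hx.1]]
        · exact hxIcc
      -- g strictly decreasing on [m, m+δ]
      have hanti : StrictAntiOn g (Set.Icc m (m + δ)) := by
        apply strictAntiOn_of_deriv_neg (convex_Icc m (m + δ))
        · exact hgcont.mono (fun x hx => ⟨le_trans hcm hx.1, le_trans hx.2 hδa⟩)
        · intro x hx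
          rw [interior_Icc] at hx
          have hxIoo : x ∈ Set.Ioo c a := ⟨lt_of_le_of_lt hcm hx.1, lt_of_lt_of_le hx.2 hδa⟩
          have hxIcc : x ∈ Set.Icc c a := ⟨hxIoo.1.le, hxIoo.2.le⟩
          have hnhds : Set.Icc c a ∈ nhds x := Icc_mem_nhds hxIoo.1 hxIoo.2
          have := (hgderiv x hxIcc).hasDerivAt hnhds
          rw [this.deriv]
          exact hφneg x ⟨hx.1.le, hx.2.le⟩
      -- m + δ ∈ S, contradiction
      have hmdS : m + δ ∈ S := by
        refine ⟨⟨by linarith, hδa⟩, ?_⟩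
        intro r hr
        rcases le_or_gt r m with hrm | hrm
        · exact hgm r ⟨hr.1, hrm⟩
        · have : g r < g m := hanti ⟨le_refl m, by linarith⟩ ⟨hrm.le, hr.2⟩ hrm
          linarith
      have := le_csSup hSbd hmdS
      linarith
    intro s hs
    exact hgm s ⟨hs.1, hmeq ▸ hs.2⟩
  -- Step 2: the function w
  set w : ℝ → ℝ := fun s => (1/2) * (Real.log (1 - g s) - Real.log (-1 - g s)) + (l - 1) * (s - c)
    with hw_def
  have hgne1 : ∀ s ∈ Set.Icc c a, (0:ℝ) < 1 - g s := by
    intro s hs; have := key s hs; linarith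
  have hgne2 : ∀ s ∈ Set.Icc c a, (0:ℝ) < -1 - g s := by
    intro s hs; have := key s hs; linarith
  have hwderiv : ∀ s ∈ Set.Icc c a, HasDerivWithinAt w (l - h s * g s) (Set.Icc c a) s := by
    intro s hs
    have hgd := hgderiv s hs
    have h1 : HasDerivWithinAt (fun x => 1 - g x) (-(φ s)) (Set.Icc c a) s := by
      exact hgd.const_sub 1
    have h2 : HasDerivWithinAt (fun x => -1 - g x) (-(φ s)) (Set.Icc c a) s := by
      exact hgd.const_sub (-1)
    have hlog1 := h1.log (ne_of_gt (hgne1 s hs))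
    have hlog2 := h2.log (ne_of_gt (hgne2 s hs))
    have hlin : HasDerivWithinAt (fun x => (l - 1) * (x - c)) (l - 1) (Set.Icc c a) s := by
      simpa using ((hasDerivWithinAt_id s (Set.Icc c a)).sub_const c).const_mul (l - 1)
    have hsum := (((hlog1.sub hlog2).const_mul (1/2 : ℝ)).add hlin)
    convert hsum using 1
    · rfl
    · rfl
    · rfl
    have e1 : (1 - g s) ≠ 0 := ne_of_gt (hgne1 s hs)
    have e2 : (-1 - g s) ≠ 0 := ne_of_gt (hgne2 s hs)
    rw [hφ_def]
    field_simp
    ring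
  have hwcont : ContinuousOn w (Set.Icc c a) := by
    apply ContinuousOn.add
    · apply ContinuousOn.mul continuousOn_const
      apply ContinuousOn.sub
      · exact ContinuousOn.log (continuousOn_const.sub hgcont)
          (fun s hs => ne_of_gt (hgne1 s hs))
      · exact ContinuousOn.log (continuousOn_const.sub hgcont)
          (fun s hs => ne_of_gt (hgne2 s hs))
    · exact continuousOn_const.mul ((continuousOn_id.sub continuousOn_const))
  have hwanti : AntitoneOn w (Set.Icc c a) := by
    apply antitoneOn_of_deriv_nonpos (convex_Icc c a) hwcont
    · intro x hx
      rw [interior_Icc] at hx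
      have hxIcc : x ∈ Set.Icc c a := ⟨hx.1.le, hx.2.le⟩
      have hnhds : Set.Icc c a ∈ nhds x := Icc_mem_nhds hx.1 hx.2
      exact ((hwderiv x hxIcc).hasDerivAt hnhds).differentiableAt.differentiableWithinAt
    · intro x hx
      rw [interior_Icc] at hx
      have hxIcc : x ∈ Set.Icc c a := ⟨hx.1.le, hx.2.le⟩
      have hnhds : Set.Icc c a ∈ nhds x := Icc_mem_nhds hx.1 hx.2
      rw [((hwderiv x hxIcc).hasDerivAt hnhds).deriv]
      have hhx : h x ≤ -1 := hneg x (hIccI hxIcc) hxIcc.1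
      have hgx : g x ≤ -l := key x hxIcc
      nlinarith
  have hwa : w a ≤ w c := hwanti ⟨le_refl c, hca'⟩ ⟨hca', le_refl a⟩ hca'
  -- compute and contradict
  have hwc : w c = (1/2) * (Real.log (1 + l) - Real.log (l - 1)) := by
    rw [hw_def]
    simp only [hgc]
    ring_nf
  have harca : (l - 1) * (a - c) = (1/2) * (Real.log (1 + l) - Real.log (l - 1)) := by
    rw [ha]
    have : c + arcoth l / (l - 1) - c = arcoth l / (l - 1) := by ring
    rw [this, mul_div_cancel₀ _ (ne_of_gt hl0)]
    unfold arcoth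
    rw [Real.log_div (by linarith) (by linarith)]
    ring_nf
  have haIcc : a ∈ Set.Icc c a := ⟨hca', le_refl a⟩
  have h1 : (0:ℝ) < 1 - g a := hgne1 a haIcc
  have h2 : (0:ℝ) < -1 - g a := hgne2 a haIcc
  have hwa' : Real.log (1 - g a) ≤ Real.log (-1 - g a) := by
    have : (1/2) * (Real.log (1 - g a) - Real.log (-1 - g a)) + (l - 1) * (a - c)
        ≤ (1/2) * (Real.log (1 + l) - Real.log (l - 1)) := by
      rw [← hwc]; exact hwa
    rw [harca] at this
    linarith
  have := (Real.log_le_log_iff h1 h2).mp hwa'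
  linarith
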